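/- Let 𝒱 ⊂ ℝ be a finite set, 𝒲 ⊆ 𝒱 nonempty with p = |𝒲| and q = |𝒱 ∖ 𝒲| ≥ 1, and suppose Σ_{w∈𝒲} w = 0 and Σ_{v∈𝒱∖𝒲} v = 0. Let the training set be T = {(v₁,v₂) ∈ 𝒱² : v₁ ∈ 𝒲 or v₂ ∈ 𝒲} with targets y(v₁,v₂) = v₁ + v₂. Let κ₀, κ₁, κ₂ ∈ ℝ, set δ₁ = κ₁ − κ₀ and δ₂ = κ₂ − κ₀, and define the kernel K((v₁,v₂),(v₁',v₂')) = κ_k where k = #{i ∈ {1,2} : v_i = v_i'}. Suppose a : T → ℝ is symmetric (a(v₁,v₂) = a(v₂,v₁)) and satisfies the interpolation equations Σ_{t'∈T} a(t') K(t,t') = y(t) for all t ∈ T. Assume (p−2)δ₁ + δ₂ ≠ 0 and that the 2×2 matrix with rows (2p(pκ₀+δ₁), p²κ₀ + 2(p−1)δ₁ + δ₂) and ((p+q−2)δ₁ + δ₂ + 2pqκ₀, q(pκ₀+δ₁)) is invertible. Then for every test pair (v₁,v₂) with v₁, v₂ ∈ 𝒱 ∖ 𝒲, Σ_{t∈T}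 a(t) K((v₁,v₂), t) = m·(v₁ + v₂), where m = p·δ₁ / ((p−2)δ₁ + δ₂). -/
import Mathlib

open Finset

/-- Proposition 2 (memorization leak in symbolic addition): with zero-mean values,
the kernel model's test-set prediction is the true sum distorted by the
proportional factor m = p·δ₁ / ((p−2)δ₁ + δ₂). -/
theorem symbolic_addition_memorization_leak
    (V W : Finset ℝ) (hWV : W ⊆ V) (hWne : W.Nonempty)
    (p q : ℕ) (hp : p = W.card) (hq : q = (V \ W).card) (hq1 : 1 ≤ q)
    (hWsum : ∑ w ∈ W, w = 0) (hVsum : ∑ v ∈ V \ W, v = 0)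
    (κ₀ κ₁ κ₂ δ₁ δ₂ : ℝ) (hδ₁ : δ₁ = κ₁ - κ₀) (hδ₂ : δ₂ = κ₂ - κ₀)
    (K : ℝ × ℝ → ℝ × ℝ → ℝ)
    (hK : ∀ s t : ℝ × ℝ, K s t =
      if s.1 = t.1 then (if s.2 = t.2 then κ₂ else κ₁)
      else (if s.2 = t.2 then κ₁ else κ₀))
    (T : Finset (ℝ × ℝ)) (hT : T = (V ×ˢ V).filter fun t => t.1 ∈ W ∨ t.2 ∈ W)
    (a : ℝ × ℝ → ℝ) (hsym : ∀ v₁ v₂ : ℝ, a (v₁, v₂) = a (v₂, v₁))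
    (hinterp : ∀ t ∈ T, ∑ t' ∈ T, a t' * K t t' = t.1 + t.2)
    (hden : ((p : ℝ) - 2) * δ₁ + δ₂ ≠ 0)
    (hmat : (!![2 * (p : ℝ) * ((p : ℝ) * κ₀ + δ₁),
                (p : ℝ) ^ 2 * κ₀ + 2 * ((p : ℝ) - 1) * δ₁ + δ₂;
                ((p : ℝ) + (q : ℝ) - 2) * δ₁ + δ₂ + 2 * (p : ℝ) * (q : ℝ) * κ₀,
                (q : ℝ) * ((p : ℝ) * κ₀ + δ₁)] : Matrix (Fin 2) (Fin 2) ℝ).det ≠ 0) :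
    ∀ v₁ ∈ V \ W, ∀ v₂ ∈ V \ W,
      ∑ t ∈ T, a t * K (v₁, v₂) t
        = ((p : ℝ) * δ₁ / (((p : ℝ) - 2) * δ₁ + δ₂)) * (v₁ + v₂) := by
  -- decomposition of the kernel
  have hKdec : ∀ x y z w : ℝ, K (x,y) (z,w) = κ₀ + (if x = z then δ₁ else 0)
      + (if y = w then δ₁ else 0)
      + (if x = z then (if y = w then δ₂ - 2*δ₁ else 0) else 0) := by
    intro x y z w
    rw [hK]
    split_ifs <;> (try rw [hδ₁]) <;> (try rw [hδ₂]) <;> ring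
  -- splitting sums over T
  have hTsum : ∀ f : ℝ × ℝ → ℝ,
      ∑ t ∈ T, f t = ∑ z ∈ W, ∑ v ∈ V, f (z, v) + ∑ z ∈ V \ W, ∑ v ∈ W, f (z, v) := by
    intro f
    have hset : T = (W ×ˢ V) ∪ ((V \ W) ×ˢ W) := by
      rw [hT]; ext ⟨x, y⟩
      simp only [mem_filter, mem_product, mem_union, mem_sdiff]
      constructor
      · rintro ⟨⟨hx, hy⟩, h⟩
        by_cases hxW : x ∈ W
        · exact Or.inl ⟨hxW, hy⟩
        · rcases h with h | h
          · exact absurd h hxW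
          · exact Or.inr ⟨⟨hx, hxW⟩, h⟩
      · rintro (⟨hx, hy⟩ | ⟨⟨hx, _⟩, hy⟩)
        · exact ⟨⟨hWV hx, hy⟩, Or.inl hx⟩
        · exact ⟨⟨hx, hWV hy⟩, Or.inr hy⟩
    have hdisj : Disjoint (W ×ˢ V) ((V \ W) ×ˢ W) := by
      simp only [Finset.disjoint_left]
      rintro ⟨x, y⟩ hx hy
      simp only [mem_product, mem_sdiff] at hx hy
      exact hy.1.2 hx.1
    rw [hset, Finset.sum_union hdisj, Finset.sum_product, Finset.sum_product]
  -- block expansion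
  have block : ∀ (S F : Finset ℝ) (x y : ℝ),
      ∑ z ∈ F, ∑ v ∈ S, a (z,v) * K (x,y) (z,v) =
        κ₀ * ∑ z ∈ F, ∑ v ∈ S, a (z,v)
        + (if x ∈ F then δ₁ * ∑ v ∈ S, a (x,v) else 0)
        + (if y ∈ S then δ₁ * ∑ z ∈ F, a (z,y) else 0)
        + (if x ∈ F then (if y ∈ S then (δ₂-2*δ₁) * a (x,y) else 0) else 0) := by
    intro S F x y
    have row : ∀ z : ℝ, ∑ v ∈ S, a (z,v) * K (x,y) (z,v) =
        κ₀ * ∑ v ∈ S, a (z,v) + (if x = z then δ₁ * ∑ v ∈ S, a (z,v) else 0)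
        + (if y ∈ S then δ₁ * a (z,y) else 0)
        + (if x = z then (if y ∈ S then (δ₂-2*δ₁) * a (z,y) else 0) else 0) := by
      intro z
      simp only [hKdec, mul_add, Finset.sum_add_distrib, mul_ite, mul_zero]
      rw [Finset.sum_ite_eq S y (fun v => a (z,v) * δ₁)]
      split_ifs with h1 h2 h2 <;>
        simp_all [Finset.sum_ite_eq, Finset.mul_sum, mul_comm]
    rw [Finset.sum_congr rfl (fun z _ => row z)]
    rw [Finset.sum_add_distrib, Finset.sum_add_distrib, Finset.sum_add_distrib]
    rw [Finset.sum_ite_eq F x (fun z => δ₁ * ∑ v ∈ S, a (z,v)),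
        Finset.sum_ite_eq F x (fun z => if y ∈ S then (δ₂-2*δ₁) * a (z,y) else 0),
        ← Finset.mul_sum]
    have hmid : ∑ z ∈ F, (if y ∈ S then δ₁ * a (z,y) else 0)
        = (if y ∈ S then δ₁ * ∑ z ∈ F, a (z,y) else 0) := by
      split_ifs <;> simp [Finset.mul_sum]
    rw [hmid]
  -- full expansion of predictions
  have hexp : ∀ x y : ℝ, ∑ t ∈ T, a t * K (x, y) t =
      (κ₀ * ∑ z ∈ W, ∑ v ∈ V, a (z,v)
        + (if x ∈ W then δ₁ * ∑ v ∈ V, a (x,v) else 0)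
        + (if y ∈ V then δ₁ * ∑ z ∈ W, a (z,y) else 0)
        + (if x ∈ W then (if y ∈ V then (δ₂-2*δ₁) * a (x,y) else 0) else 0))
      + (κ₀ * ∑ z ∈ V \ W, ∑ v ∈ W, a (z,v)
        + (if x ∈ V \ W then δ₁ * ∑ v ∈ W, a (x,v) else 0)
        + (if y ∈ W then δ₁ * ∑ z ∈ V \ W, a (z,y) else 0)
        + (if x ∈ V \ W then (if y ∈ W then (δ₂-2*δ₁) * a (x,y) else 0) else 0)) := by
    intro x y
    rw [hTsum (fun t => a t * K (x, y) t), block V W x y, block W (V \ W) x y]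
  -- abbreviations
  set SB := ∑ z ∈ V \ W, ∑ v ∈ W, a (z, v) with hSBdef
  set AW := ∑ z ∈ W, ∑ v ∈ W, a (z, v) with hAWdef
  have hS1 : ∑ z ∈ W, ∑ v ∈ V, a (z, v) = AW + SB := by
    have h1 : ∀ z : ℝ, ∑ v ∈ V, a (z, v)
        = ∑ v ∈ V \ W, a (z, v) + ∑ v ∈ W, a (z, v) :=
      fun z => (Finset.sum_sdiff hWV).symm
    rw [Finset.sum_congr rfl (fun z _ => h1 z), Finset.sum_add_distrib]
    have h2 : ∑ z ∈ W, ∑ v ∈ V \ W, a (z, v) = SB := by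
      rw [hSBdef, Finset.sum_comm]
      exact Finset.sum_congr rfl fun u _ => Finset.sum_congr rfl fun w _ => hsym w u
    rw [h2]; ring
  have hSC : ∑ z ∈ W, ∑ v ∈ V, a (v, z) = AW + SB := by
    have h1 : ∀ z : ℝ, ∑ v ∈ V, a (v, z)
        = ∑ v ∈ V \ W, a (v, z) + ∑ v ∈ W, a (v, z) :=
      fun z => (Finset.sum_sdiff hWV).symm
    rw [Finset.sum_congr rfl (fun z _ => h1 z), Finset.sum_add_distrib]
    have h2 : ∑ z ∈ W, ∑ v ∈ V \ W, a (v, z) = SB := Finset.sum_comm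
    have h3 : ∑ z ∈ W, ∑ v ∈ W, a (v, z) = AW := Finset.sum_comm
    rw [h2, h3]; ring
  have hmemT : ∀ x y : ℝ, x ∈ V → y ∈ V → (x ∈ W ∨ y ∈ W) → (x, y) ∈ T := by
    intro x y hx hy h
    rw [hT]
    simp only [mem_filter, mem_product]
    exact ⟨⟨hx, hy⟩, h⟩
  have hpc : ((W.card : ℕ) : ℝ) = (p : ℝ) := by rw [hp]
  have hqc : (((V \ W).card : ℕ) : ℝ) = (q : ℝ) := by rw [hq]
  have hsum_uw : ∀ u : ℝ, ∑ w ∈ W, (u + w) = (p : ℝ) * u := by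
    intro u
    rw [Finset.sum_add_distrib, hWsum, add_zero, Finset.sum_const, nsmul_eq_mul, hpc]
  have hsum_pw : ∑ w ∈ W, (p : ℝ) * w = 0 := by
    rw [← Finset.mul_sum, hWsum, mul_zero]
  -- training equations
  have Euw : ∀ u ∈ V \ W, ∀ w ∈ W,
      κ₀ * (AW + 2*SB) + δ₁ * (∑ w' ∈ W, a (u, w')) + δ₁ * (∑ v ∈ V, a (v, w))
        + (δ₂ - 2*δ₁) * a (u, w) = u + w := by
    intro u hu w hw
    have huV : u ∈ V := (Finset.mem_sdiff.mp hu).1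
    have huW : u ∉ W := (Finset.mem_sdiff.mp hu).2
    have hwV : w ∈ V := hWV hw
    have h := hinterp (u, w) (hmemT u w huV hwV (Or.inr hw))
    dsimp only at h
    rw [hexp u w] at h
    rw [if_neg huW, if_pos hu, if_pos hwV, if_pos hw, if_neg huW, if_pos hu,
        if_pos hw] at h
    have hCrow : ∑ v ∈ V \ W, a (v, w) + ∑ v ∈ W, a (v, w) = ∑ v ∈ V, a (v, w) :=
      Finset.sum_sdiff hWV
    linear_combination h - κ₀ * hS1 - δ₁ * hCrow
  have Eww : ∀ w₁ ∈ W, ∀ w₂ ∈ W,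
      κ₀ * (AW + 2*SB) + δ₁ * (∑ v ∈ V, a (v, w₁)) + δ₁ * (∑ v ∈ V, a (v, w₂))
        + (δ₂ - 2*δ₁) * a (w₁, w₂) = w₁ + w₂ := by
    intro w₁ hw₁ w₂ hw₂
    have h1V : w₁ ∈ V := hWV hw₁
    have h2V : w₂ ∈ V := hWV hw₂
    have h1U : w₁ ∉ V \ W := fun h => (Finset.mem_sdiff.mp h).2 hw₁
    have h := hinterp (w₁, w₂) (hmemT w₁ w₂ h1V h2V (Or.inl hw₁))
    dsimp only at h
    rw [hexp w₁ w₂] at h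
    rw [if_pos hw₁, if_pos h2V, if_pos hw₁, if_pos h2V, if_neg h1U, if_pos hw₂,
        if_neg h1U] at h
    have hCrow : ∑ v ∈ V \ W, a (v, w₂) + ∑ v ∈ W, a (v, w₂) = ∑ v ∈ V, a (v, w₂) :=
      Finset.sum_sdiff hWV
    have hsymsum : ∑ v ∈ V, a (w₁, v) = ∑ v ∈ V, a (v, w₁) :=
      Finset.sum_congr rfl fun v _ => hsym w₁ v
    linear_combination h - κ₀ * hS1 - δ₁ * hCrow - δ₁ * hsymsum
  -- row-summed equations
  have hBu : ∀ u ∈ V \ W,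
      (((p : ℝ) - 2) * δ₁ + δ₂) * (∑ w ∈ W, a (u, w))
        = (p : ℝ) * u - (p : ℝ) * κ₀ * (AW + 2*SB) - δ₁ * (AW + SB) := by
    intro u hu
    have h : ∑ w ∈ W, (κ₀ * (AW + 2*SB) + δ₁ * (∑ w' ∈ W, a (u, w'))
          + δ₁ * (∑ v ∈ V, a (v, w)) + (δ₂ - 2*δ₁) * a (u, w))
        = ∑ w ∈ W, (u + w) :=
      Finset.sum_congr rfl (fun w hw => Euw u hu w hw)
    rw [hsum_uw u] at h
    simp only [Finset.sum_add_distrib, Finset.sum_const, nsmul_eq_mul,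
      ← Finset.mul_sum, hpc] at h
    linear_combination h - δ₁ * hSC
  have hEw1 : ∀ w₁ ∈ W,
      (p : ℝ) * κ₀ * (AW + 2*SB) + (p : ℝ) * δ₁ * (∑ v ∈ V, a (v, w₁))
        + δ₁ * (AW + SB) + (δ₂ - 2*δ₁) * (∑ w₂ ∈ W, a (w₁, w₂)) = (p : ℝ) * w₁ := by
    intro w₁ hw₁
    have h : ∑ w₂ ∈ W, (κ₀ * (AW + 2*SB) + δ₁ * (∑ v ∈ V, a (v, w₁))
          + δ₁ * (∑ v ∈ V, a (v, w₂)) + (δ₂ - 2*δ₁) * a (w₁, w₂))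
        = ∑ w₂ ∈ W, (w₁ + w₂) :=
      Finset.sum_congr rfl (fun w hw => Eww w₁ hw₁ w hw)
    rw [hsum_uw w₁] at h
    simp only [Finset.sum_add_distrib, Finset.sum_const, nsmul_eq_mul,
      ← Finset.mul_sum, hpc] at h
    linear_combination h - δ₁ * hSC
  have hE1 : (p : ℝ)^2 * κ₀ * (AW + 2*SB) + 2 * (p : ℝ) * δ₁ * (AW + SB)
      + (δ₂ - 2*δ₁) * AW = 0 := by
    have h : ∑ w₁ ∈ W, ((p : ℝ) * κ₀ * (AW + 2*SB) + (p : ℝ) * δ₁ * (∑ v ∈ V, a (v, w₁))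
          + δ₁ * (AW + SB) + (δ₂ - 2*δ₁) * (∑ w₂ ∈ W, a (w₁, w₂)))
        = ∑ w₁ ∈ W, (p : ℝ) * w₁ :=
      Finset.sum_congr rfl (fun w hw => hEw1 w hw)
    rw [hsum_pw] at h
    simp only [Finset.sum_add_distrib, Finset.sum_const, nsmul_eq_mul,
      ← Finset.mul_sum, hpc] at h
    linear_combination h - (p : ℝ) * δ₁ * hSC - (δ₂ - 2*δ₁) * hAWdef
  have hE2 : (((p : ℝ) - 2) * δ₁ + δ₂) * SB
      + (q : ℝ) * (p : ℝ) * κ₀ * (AW + 2*SB) + (q : ℝ) * δ₁ * (AW + SB) = 0 := by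
    have h : ∑ u ∈ V \ W, ((((p : ℝ) - 2) * δ₁ + δ₂) * (∑ w ∈ W, a (u, w)))
        = ∑ u ∈ V \ W, ((p : ℝ) * u - (p : ℝ) * κ₀ * (AW + 2*SB) - δ₁ * (AW + SB)) :=
      Finset.sum_congr rfl (fun u hu => hBu u hu)
    have hrhs : ∑ u ∈ V \ W, ((p : ℝ) * u - (p : ℝ) * κ₀ * (AW + 2*SB) - δ₁ * (AW + SB))
        = - (q : ℝ) * ((p : ℝ) * κ₀ * (AW + 2*SB)) - (q : ℝ) * (δ₁ * (AW + SB)) := by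
      rw [Finset.sum_sub_distrib, Finset.sum_sub_distrib, ← Finset.mul_sum, hVsum,
        Finset.sum_const, Finset.sum_const, nsmul_eq_mul, nsmul_eq_mul, hqc]
      ring
    rw [hrhs, ← Finset.mul_sum] at h
    linear_combination h + (((p : ℝ) - 2) * δ₁ + δ₂) * hSBdef
  -- invertibility gives SB = AW = 0
  rw [Matrix.det_fin_two_of] at hmat
  have hSB0 : SB = 0 := by
    have key : (2 * (p : ℝ) * ((p : ℝ) * κ₀ + δ₁) * ((q : ℝ) * ((p : ℝ) * κ₀ + δ₁))
        - ((p : ℝ) ^ 2 * κ₀ + 2 * ((p : ℝ) - 1) * δ₁ + δ₂)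
          * (((p : ℝ) + (q : ℝ) - 2) * δ₁ + δ₂ + 2 * (p : ℝ) * (q : ℝ) * κ₀)) * SB = 0 := by
      linear_combination ((q : ℝ) * ((p : ℝ) * κ₀ + δ₁)) * hE1
        - ((p : ℝ) ^ 2 * κ₀ + 2 * ((p : ℝ) - 1) * δ₁ + δ₂) * hE2
    rcases mul_eq_zero.mp key with h | h
    · exact absurd h hmat
    · exact h
  have hAW0 : AW = 0 := by
    have key : (2 * (p : ℝ) * ((p : ℝ) * κ₀ + δ₁) * ((q : ℝ) * ((p : ℝ) * κ₀ + δ₁))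
        - ((p : ℝ) ^ 2 * κ₀ + 2 * ((p : ℝ) - 1) * δ₁ + δ₂)
          * (((p : ℝ) + (q : ℝ) - 2) * δ₁ + δ₂ + 2 * (p : ℝ) * (q : ℝ) * κ₀)) * AW = 0 := by
      linear_combination (2 * (p : ℝ) * ((p : ℝ) * κ₀ + δ₁)) * hE2
        - (((p : ℝ) + (q : ℝ) - 2) * δ₁ + δ₂ + 2 * (p : ℝ) * (q : ℝ) * κ₀) * hE1
    rcases mul_eq_zero.mp key with h | h
    · exact absurd h hmat
    · exact h
  -- conclusion
  intro v₁ hv₁ v₂ hv₂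
  have h1V : v₁ ∈ V := (Finset.mem_sdiff.mp hv₁).1
  have h1W : v₁ ∉ W := (Finset.mem_sdiff.mp hv₁).2
  have h2V : v₂ ∈ V := (Finset.mem_sdiff.mp hv₂).1
  have h2W : v₂ ∉ W := (Finset.mem_sdiff.mp hv₂).2
  rw [hexp v₁ v₂]
  rw [if_neg h1W, if_pos hv₁, if_pos h2V, if_neg h2W, if_neg h1W, if_pos hv₁, if_neg h2W]
  have hB1 := hBu v₁ hv₁
  have hB2 := hBu v₂ hv₂
  have hsymW : ∑ z ∈ W, a (z, v₂) = ∑ w ∈ W, a (v₂, w) :=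
    Finset.sum_congr rfl fun z _ => hsym z v₂
  rw [div_mul_eq_mul_div, eq_div_iff hden]
  linear_combination δ₁ * hB1 + δ₁ * hB2
    + ((((p : ℝ) - 2) * δ₁ + δ₂) * δ₁) * hsymW
    + ((((p : ℝ) - 2) * δ₁ + δ₂) * κ₀) * hS1
    + (2 * (((p : ℝ) - 2) * δ₁ + δ₂) * κ₀ - 4 * (p : ℝ) * κ₀ * δ₁ - 2 * δ₁^2) * hSB0
    + ((((p : ℝ) - 2) * δ₁ + δ₂) * κ₀ - 2 * (p : ℝ) * κ₀ * δ₁ - 2 * δ₁^2) * hAW0
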